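/- arXiv:2212.01881 — 2 statements merged into one kernel-verified Lean document; each statement's English description precedes it below -/
import Mathlib

section
/- Let A = {A_1, …, A_n} be a finite boundary (each A_i a nonempty finite subset) in a finite-dimensional real normed space X, and let A^Conv = {conv(A_1), …, conv(A_n)}. Suppose A is stable, i.e., S_A = S_{A^Conv}. Then for every solution vector d of A, the compact K_d^Conv = ⋂_{i=1}^n B_{d_i}(conv(A_i)) satisfies d_H(conv(A_i), K_d^Conv) = d_i for all i; in particular S(A^Conv, K_d^Conv) = S_{A^Conv}, so K_d^Conv is the maximal Steiner compact of its class for the boundary A^Conv. -/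
open Metric Set

/-- `steinerSum A K = ∑ i, d_H(A_i, K)` — the functional from the Fermat–Steiner problem. -/
noncomputable def steinerSum {X : Type*} [PseudoMetricSpace X] {n : ℕ}
    (A : Fin n → Set X) (K : Set X) : ℝ :=
  ∑ i, Metric.hausdorffDist (A i) K

/-- A Steiner compact for the boundary `A`: a nonempty compact set minimizing
`steinerSum A` over nonempty compact sets. -/
def IsSteinerCompact {X : Type*} [PseudoMetricSpace X] {n : ℕ}
    (A : Fin n → Set X) (K : Set X) : Prop :=
  K.Nonempty ∧ IsCompact K ∧
    ∀ K' : Set X, K'.Nonempty → IsCompact K' → steinerSum A K ≤ steinerSum A K'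

/-- `d` is a solution vector for the boundary `A`: `d i = d_H(A_i, K)` for
some Steiner compact `K`. -/
def IsSolutionVector {X : Type*} [PseudoMetricSpace X] {n : ℕ}
    (A : Fin n → Set X) (d : Fin n → ℝ) : Prop :=
  ∃ K : Set X, IsSteinerCompact A K ∧ ∀ i, d i = Metric.hausdorffDist (A i) K

/-- `steinerInf A = S_A`, the infimum of `steinerSum A K` over nonempty compact `K`. -/
noncomputable def steinerInf {X : Type*} [PseudoMetricSpace X] {n : ℕ}
    (A : Fin n → Set X) : ℝ :=
  sInf {s : ℝ | ∃ K : Set X, K.Nonempty ∧ IsCompact K ∧ s = steinerSum A K}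

private lemma mem_cthick_iff' {X : Type*} [PseudoMetricSpace X] {s : Set X} (hs : s.Nonempty)
    {δ : ℝ} (hδ : 0 ≤ δ) {x : X} : x ∈ cthickening δ s ↔ infDist x s ≤ δ := by
  rw [Metric.mem_cthickening_iff]
  exact ENNReal.le_ofReal_iff_toReal_le (Metric.infEdist_ne_top hs) hδ

theorem stmt18 {X : Type*} [NormedAddCommGroup X] [NormedSpace ℝ X] [FiniteDimensional ℝ X]
    (n : ℕ) (A : Fin n → Set X)
    (hA : ∀ i, (A i).Nonempty ∧ (A i).Finite)
    (hstable : steinerInf A = steinerInf (fun i => convexHull ℝ (A i))) :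
    ∀ d : Fin n → ℝ, IsSolutionVector A d →
      ∀ KdConv : Set X, KdConv = ⋂ i, cthickening (d i) (convexHull ℝ (A i)) →
        (∀ i, Metric.hausdorffDist (convexHull ℝ (A i)) KdConv = d i) ∧
        steinerSum (fun i => convexHull ℝ (A i)) KdConv
          = steinerInf (fun i => convexHull ℝ (A i)) ∧
        (∀ K' : Set X, K'.Nonempty → IsCompact K' →
          (∀ i, Metric.hausdorffDist (convexHull ℝ (A i)) K' = d i) → K' ⊆ KdConv) := by
  intro d hd KdConv hKdConv
  obtain ⟨K, ⟨hKne, hKcomp, hKmin⟩, hdK⟩ := hd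
  have hCne : ∀ i, (convexHull ℝ (A i)).Nonempty :=
    fun i => (hA i).1.mono (subset_convexHull ℝ (A i))
  have hCcomp : ∀ i, IsCompact (convexHull ℝ (A i)) :=
    fun i => (hA i).2.isCompact_convexHull ℝ
  have hCbdd : ∀ i, Bornology.IsBounded (convexHull ℝ (A i)) :=
    fun i => (hCcomp i).isBounded
  have hKbdd := hKcomp.isBounded
  have hdnn : ∀ i, 0 ≤ d i := fun i => (hdK i) ▸ hausdorffDist_nonneg
  have hedK : ∀ i, EMetric.hausdorffEdist (A i) K ≠ ⊤ := fun i =>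
    hausdorffEdist_ne_top_of_nonempty_of_bounded (hA i).1 hKne ((hA i).2.isBounded) hKbdd
  -- K ⊆ KdConv
  have hKsub : K ⊆ KdConv := by
    rw [hKdConv]
    refine subset_iInter fun i x hx => ?_
    rw [mem_cthick_iff' (hCne i) (hdnn i)]
    calc infDist x (convexHull ℝ (A i)) ≤ infDist x (A i) :=
          infDist_le_infDist_of_subset (subset_convexHull ℝ (A i)) (hA i).1
      _ ≤ hausdorffDist K (A i) :=
          infDist_le_hausdorffDist_of_mem hx (by rw [EMetric.hausdorffEdist_comm]; exact hedK i)
      _ = hausdorffDist (A i) K := hausdorffDist_comm ..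
      _ = d i := (hdK i).symm
  have hKCne : KdConv.Nonempty := hKne.mono hKsub
  rcases Nat.eq_zero_or_pos n with hn | hn
  · -- degenerate case `n = 0`
    subst hn
    refine ⟨fun i => i.elim0, ?_, ?_⟩
    · have hset : {s : ℝ | ∃ K' : Set X, K'.Nonempty ∧ IsCompact K' ∧
          s = steinerSum (fun i : Fin 0 => convexHull ℝ (A i)) K'} = {0} := by
        ext s
        simp only [mem_setOf_eq, mem_singleton_iff, steinerSum, Finset.univ_eq_empty,
          Finset.sum_empty]
        constructor
        · rintro ⟨K', -, -, rfl⟩; rfl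
        · rintro rfl
          exact ⟨{0}, singleton_nonempty _, isCompact_singleton, rfl⟩
      have hz : steinerSum (fun i : Fin 0 => convexHull ℝ (A i)) KdConv = 0 := by
        simp [steinerSum]
      rw [hz]
      show (0:ℝ) = sInf {s : ℝ | ∃ K' : Set X, K'.Nonempty ∧ IsCompact K' ∧
        s = steinerSum (fun i : Fin 0 => convexHull ℝ (A i)) K'}
      rw [hset, csInf_singleton]
    · intro K' _ _ _
      rw [hKdConv, Set.iInter_of_empty]
      exact subset_univ _
  -- main case `0 < n`
  have i0 : Fin n := ⟨0, hn⟩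
  have hclosed : IsClosed KdConv := hKdConv ▸ isClosed_iInter fun i => isClosed_cthickening
  have hKCbdd : Bornology.IsBounded KdConv := by
    rw [hKdConv]
    exact ((hCbdd i0).cthickening).subset (iInter_subset _ i0)
  have hKCcomp : IsCompact KdConv := Metric.isCompact_of_isClosed_isBounded hclosed hKCbdd
  have hconvex : Convex ℝ KdConv :=
    hKdConv ▸ convex_iInter fun i => (convex_convexHull ℝ (A i)).cthickening _
  -- `conv(A i) ⊆ B_{d i}(KdConv)`
  have hCsub : ∀ i, convexHull ℝ (A i) ⊆ cthickening (d i) KdConv := by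
    intro i
    refine convexHull_min (fun y hy => ?_) (hconvex.cthickening _)
    rw [mem_cthick_iff' hKCne (hdnn i)]
    calc infDist y KdConv ≤ infDist y K := infDist_le_infDist_of_subset hKsub hKne
      _ ≤ hausdorffDist (A i) K := infDist_le_hausdorffDist_of_mem hy (hedK i)
      _ = d i := (hdK i).symm
  -- `d_H(conv(A i), KdConv) ≤ d i`
  have hub : ∀ i, hausdorffDist (convexHull ℝ (A i)) KdConv ≤ d i := by
    intro i
    refine hausdorffDist_le_of_infDist (hdnn i) (fun y hy => ?_) (fun x hx => ?_)
    · exact (mem_cthick_iff' hKCne (hdnn i)).mp (hCsub i hy)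
    · have hx' : x ∈ cthickening (d i) (convexHull ℝ (A i)) := by
        rw [hKdConv] at hx
        exact iInter_subset _ i hx
      exact (mem_cthick_iff' (hCne i) (hdnn i)).mp hx'
  -- `K` achieves the infimum
  have hSK : steinerSum A K = steinerInf A := by
    refine le_antisymm ?_ ?_
    · refine le_csInf ⟨_, K, hKne, hKcomp, rfl⟩ ?_
      rintro s ⟨K', hne', hcomp', rfl⟩
      exact hKmin K' hne' hcomp'
    · refine csInf_le ⟨0, ?_⟩ ⟨K, hKne, hKcomp, rfl⟩
      rintro s ⟨K', -, -, rfl⟩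
      exact Finset.sum_nonneg fun i _ => hausdorffDist_nonneg
  have hleC : steinerInf (fun i => convexHull ℝ (A i)) ≤
      steinerSum (fun i => convexHull ℝ (A i)) KdConv := by
    refine csInf_le ⟨0, ?_⟩ ⟨KdConv, hKCne, hKCcomp, rfl⟩
    rintro s ⟨K', -, -, rfl⟩
    exact Finset.sum_nonneg fun i _ => hausdorffDist_nonneg
  have hsum_d : ∑ i, d i = steinerSum A K := Finset.sum_congr rfl fun i _ => hdK i
  have hd_inf : ∑ i, d i = steinerInf (fun i => convexHull ℝ (A i)) := by
    rw [hsum_d, hSK, hstable]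
  have key : steinerSum (fun i => convexHull ℝ (A i)) KdConv = ∑ i, d i := by
    refine le_antisymm (Finset.sum_le_sum fun i _ => hub i) ?_
    rw [hd_inf]; exact hleC
  have hterm : ∀ i, hausdorffDist (convexHull ℝ (A i)) KdConv = d i := by
    have := (Finset.sum_eq_sum_iff_of_le (fun i _ => hub i)).mp key
    exact fun i => this i (Finset.mem_univ i)
  refine ⟨hterm, by rw [key, hd_inf], ?_⟩
  -- maximality
  intro K' hne' hcomp' hdist x hx
  rw [hKdConv]
  refine mem_iInter.mpr fun i => ?_
  rw [mem_cthick_iff' (hCne i) (hdnn i)]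
  have hfin : EMetric.hausdorffEdist K' (convexHull ℝ (A i)) ≠ ⊤ :=
    hausdorffEdist_ne_top_of_nonempty_of_bounded hne' (hCne i) hcomp'.isBounded (hCbdd i)
  calc infDist x (convexHull ℝ (A i)) ≤ hausdorffDist K' (convexHull ℝ (A i)) :=
        infDist_le_hausdorffDist_of_mem hx hfin
    _ = hausdorffDist (convexHull ℝ (A i)) K' := hausdorffDist_comm ..
    _ = d i := hdist i
end

section
/- Let X be a finite-dimensional real normed space whose norm is strictly convex, let A = {A_1, …, A_n} be a finite boundary with A_s = {a_1^s, …, a_{m_s}^s}, let d be a solution vector for A with all d_i > 0, let K_d = ⋂_{i=1}^n B_{d_i}(A_i), let D_i be the set of discrete points of A_i and HP_d(D^A) = ⋃_{i=1}^n (B_{d_i}(D_i) ∩ K_d), and let U_d^Conv = ⋂_{i=1}^n U_{d_i}(conv(A_i)). Suppose U_d^Conv ≠ ∅ and there exists an index s such that (⋃_{j=1}^{m_s} ∂B_{d_s}(a_j^s)) ∩ HP_d(D^A) ⊆ U_d^Conv. Then the boundary A is unstable, i.e., S_{A^Conv} < S_A. -/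
open Metric Set

section Aux

variable {X : Type*} [NormedAddCommGroup X] [NormedSpace ℝ X]

/-- The sublevel set of the distance to a compact convex set is convex. -/
lemma aux_convex_infDist_le {S : Set X} (hconv : Convex ℝ S) (hcpt : IsCompact S)
    (hne : S.Nonempty) (r : ℝ) : Convex ℝ {y : X | infDist y S ≤ r} := by
  intro x hx y hy a b ha hb hab
  obtain ⟨px, hpxS, hpx⟩ := hcpt.exists_infDist_eq_dist hne x
  obtain ⟨py, hpyS, hpy⟩ := hcpt.exists_infDist_eq_dist hne y
  have hmem : a • px + b • py ∈ S := hconv hpxS hpyS ha hb hab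
  have h1 : infDist (a • x + b • y) S ≤ dist (a • x + b • y) (a • px + b • py) :=
    infDist_le_dist_of_mem hmem
  have h2 : dist (a • x + b • y) (a • px + b • py) ≤ a * dist x px + b * dist y py := by
    calc dist (a • x + b • y) (a • px + b • py)
        ≤ dist (a • x) (a • px) + dist (b • y) (b • py) := dist_add_add_le _ _ _ _
      _ = a * dist x px + b * dist y py := by
          rw [dist_smul₀, dist_smul₀, Real.norm_eq_abs, Real.norm_eq_abs,
            abs_of_nonneg ha, abs_of_nonneg hb]
  have hx' : dist x px ≤ r := by rw [← hpx]; exact hx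
  have hy' : dist y py ≤ r := by rw [← hpy]; exact hy
  have : a * dist x px + b * dist y py ≤ r := by
    calc a * dist x px + b * dist y py ≤ a * r + b * r := by
          gcongr
      _ = r := by rw [← add_mul, hab, one_mul]
  exact le_trans h1 (le_trans h2 this)

lemma aux_mem_cthickening_iff {E : Set X} (hE : E.Nonempty) {δ : ℝ} (hδ : 0 ≤ δ) (x : X) :
    x ∈ cthickening δ E ↔ infDist x E ≤ δ := by
  rw [mem_cthickening_iff, Metric.infDist]
  exact ENNReal.le_ofReal_iff_toReal_le (infEdist_ne_top hE) hδ

end Aux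

theorem stmt19 {X : Type*} [NormedAddCommGroup X] [NormedSpace ℝ X]
    [FiniteDimensional ℝ X] [StrictConvexSpace ℝ X]
    (n : ℕ) (A : Fin n → Set X)
    (hA : ∀ i, (A i).Nonempty ∧ (A i).Finite)
    (d : Fin n → ℝ) (hd : IsSolutionVector A d) (hdpos : ∀ i, 0 < d i)
    (Kd : Set X) (hKd : Kd = ⋂ i, cthickening (d i) (A i))
    (D : Fin n → Set X) (hD : ∀ i, D i = {a ∈ A i | (closedBall a (d i) ∩ Kd).Finite})
    (HPD : Set X) (hHPD : HPD = ⋃ i, (cthickening (d i) (D i) ∩ Kd))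
    (UdConv : Set X) (hUdConv : UdConv = ⋂ i, thickening (d i) (convexHull ℝ (A i)))
    (hUne : UdConv.Nonempty)
    (hs : ∃ s : Fin n, (⋃ a ∈ A s, frontier (closedBall a (d s))) ∩ HPD ⊆ UdConv) :
    steinerInf (fun i => convexHull ℝ (A i)) < steinerInf A := by
  classical
  obtain ⟨s, hssub⟩ := hs
  obtain ⟨K₀, ⟨hK₀ne, hK₀cpt, hK₀min⟩, hK₀d⟩ := hd
  have hAne : ∀ i, (A i).Nonempty := fun i => (hA i).1
  have hAfin : ∀ i, (A i).Finite := fun i => (hA i).2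
  set C : Fin n → Set X := fun i => convexHull ℝ (A i) with hCdef
  have hACsub : ∀ i, A i ⊆ C i := fun i => subset_convexHull ℝ (A i)
  have hCne : ∀ i, (C i).Nonempty := fun i => (hAne i).convexHull
  have hCcpt : ∀ i, IsCompact (C i) := fun i => (hAfin i).isCompact_convexHull (𝕜 := ℝ)
  have hCconv : ∀ i, Convex ℝ (C i) := fun i => convex_convexHull ℝ _
  have hd0 : ∀ i, (0:ℝ) ≤ d i := fun i => (hdpos i).le
  -- membership in Kd
  have hKdmem : ∀ x, x ∈ Kd ↔ ∀ i, infDist x (A i) ≤ d i := by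
    intro x
    rw [hKd, mem_iInter]
    exact forall_congr' fun i => aux_mem_cthickening_iff (hAne i) (hd0 i) x
  -- the convex admissible set K'
  set K' : Set X := ⋂ i, {x : X | infDist x (C i) ≤ d i} with hK'def
  have hK'mem : ∀ x, x ∈ K' ↔ ∀ i, infDist x (C i) ≤ d i := by
    intro x; rw [hK'def, mem_iInter]; rfl
  have hK'conv : Convex ℝ K' :=
    convex_iInter fun i => aux_convex_infDist_le (hCconv i) (hCcpt i) (hCne i) (d i)
  have hKdK' : Kd ⊆ K' := by
    intro x hx
    rw [hK'mem]
    intro i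
    exact le_trans (infDist_le_infDist_of_subset (hACsub i) (hAne i)) ((hKdmem x).1 hx i)
  have hK₀Kd : K₀ ⊆ Kd := by
    intro x hx
    rw [hKdmem]
    intro i
    have fin : EMetric.hausdorffEdist K₀ (A i) ≠ ⊤ :=
      hausdorffEdist_ne_top_of_nonempty_of_bounded hK₀ne (hAne i)
        hK₀cpt.isBounded (hAfin i).isCompact.isBounded
    have := infDist_le_hausdorffDist_of_mem hx fin
    rwa [hausdorffDist_comm, ← hK₀d i] at this
  have hK₀K' : K₀ ⊆ K' := fun x hx => hKdK' (hK₀Kd hx)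
  -- witnesses in K₀ for boundary points
  have hwitK₀ : ∀ i, ∀ a ∈ A i, ∃ x ∈ K₀, dist a x ≤ d i := by
    intro i a ha
    have fin : EMetric.hausdorffEdist (A i) K₀ ≠ ⊤ :=
      hausdorffEdist_ne_top_of_nonempty_of_bounded (hAne i) hK₀ne
        (hAfin i).isCompact.isBounded hK₀cpt.isBounded
    have h1 : infDist a K₀ ≤ d i := by
      rw [hK₀d i]; exact infDist_le_hausdorffDist_of_mem ha fin
    obtain ⟨x, hxK, hx⟩ := hK₀cpt.exists_infDist_eq_dist hK₀ne a
    exact ⟨x, hxK, by rw [← hx]; exact h1⟩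
  -- UdConv facts
  have hUdopen : IsOpen UdConv := by
    rw [hUdConv]; exact isOpen_iInter_of_finite fun i => isOpen_thickening
  have hUdlt : ∀ x ∈ UdConv, ∀ i, infDist x (C i) < d i := by
    intro x hx i
    rw [hUdConv, mem_iInter] at hx
    exact (mem_thickening_iff_infDist_lt (hCne i)).1 (hx i)
  have hUdK' : UdConv ⊆ K' := fun x hx => (hK'mem x).2 fun i => (hUdlt x hx i).le
  -- HPD membership helper
  have hHPDmem : ∀ (x : X) (i : Fin n) (a : X), x ∈ Kd → a ∈ D i → dist x a ≤ d i → x ∈ HPD := by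
    intro x i a hxKd haD hdist
    rw [hHPD, mem_iUnion]
    exact ⟨i, mem_cthickening_of_dist_le x a (d i) (D i) haD hdist, hxKd⟩
  -- frontier membership helper
  have hfrontier : ∀ (x b : X), b ∈ A s → dist x b = d s →
      x ∈ ⋃ a ∈ A s, frontier (closedBall a (d s)) := by
    intro x b hb hdist
    refine mem_iUnion₂.2 ⟨b, hb, ?_⟩
    rw [frontier_closedBall b (ne_of_gt (hdpos s))]
    exact hdist
  -- ★s : strict witnesses for the index s
  have hwits : ∀ a ∈ A s, ∃ z ∈ K', dist a z < d s := by
    intro a ha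
    obtain ⟨x, hxK₀, hxd⟩ := hwitK₀ s a ha
    rcases lt_or_eq_of_le hxd with hlt | heq
    · exact ⟨x, hK₀K' hxK₀, hlt⟩
    · have hxKd := hK₀Kd hxK₀
      by_cases haD : a ∈ D s
      · have hxHPD : x ∈ HPD := hHPDmem x s a hxKd haD (by rw [dist_comm]; exact heq.le)
        have hxfr := hfrontier x a ha (by rw [dist_comm]; exact heq)
        have hxU : x ∈ UdConv := hssub ⟨hxfr, hxHPD⟩
        obtain ⟨r, hr0, hball⟩ := Metric.isOpen_iff.1 hUdopen x hxU
        set t : ℝ := min (1/2) (r / (2 * d s)) with htdef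
        have ht0 : 0 < t := lt_min (by norm_num) (div_pos hr0 (by nlinarith [hdpos s]))
        have ht1 : t < 1 := lt_of_le_of_lt (min_le_left _ _) (by norm_num)
        set z : X := x + t • (a - x) with hzdef
        have hzx : dist z x = t * d s := by
          rw [hzdef, dist_eq_norm, add_sub_cancel_left, norm_smul, Real.norm_eq_abs,
            abs_of_pos ht0, ← dist_eq_norm, dist_comm, ← heq, dist_comm]
        have hzU : z ∈ UdConv := by
          apply hball
          rw [mem_ball, hzx]
          have : t * d s ≤ (r / (2 * d s)) * d s :=
            mul_le_mul_of_nonneg_right (min_le_right _ _) (hd0 s)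
          have hds : d s ≠ 0 := (hdpos s).ne'
          have h2 : (r / (2 * d s)) * d s = r / 2 := by
            field_simp
          nlinarith
        have haz : dist a z = (1 - t) * d s := by
          have : a - z = (1 - t) • (a - x) := by
            rw [hzdef]; module
          rw [dist_eq_norm, this, norm_smul, Real.norm_eq_abs,
            abs_of_pos (by linarith : (0:ℝ) < 1 - t), ← dist_eq_norm, heq]
        refine ⟨z, hUdK' hzU, ?_⟩
        rw [haz]
        nlinarith [hdpos s]
      · have hinf : (closedBall a (d s) ∩ Kd).Infinite := by
          rw [hD s] at haD
          simp only [mem_setOf_eq, not_and] at haD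
          exact fun hfin => haD ha hfin
        obtain ⟨x₁, hx₁, x₂, hx₂, hne12⟩ := hinf.nontrivial
        set m : X := (1/2 : ℝ) • x₁ + (1/2 : ℝ) • x₂ with hmdef
        have hm1 : m ∈ interior (closedBall a (d s)) :=
          strictConvex_closedBall ℝ a (d s) hx₁.1 hx₂.1 hne12
            (by norm_num) (by norm_num) (by norm_num)
        rw [interior_closedBall a (ne_of_gt (hdpos s)), mem_ball] at hm1
        have hmK' : m ∈ K' :=
          hK'conv (hKdK' hx₁.2) (hKdK' hx₂.2) (by norm_num) (by norm_num) (by norm_num)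
        exact ⟨m, hmK', by rwa [dist_comm]⟩
  -- ★i : witnesses with strict conv-distance to C s
  have hwit1 : ∀ i, ∀ a ∈ A i, ∃ z ∈ K', dist a z ≤ d i ∧ infDist z (C s) < d s := by
    intro i a ha
    by_contra hcon
    push_neg at hcon
    have heqd : ∀ z ∈ K', dist a z ≤ d i → infDist z (C s) = d s := by
      intro z hz hdz
      exact le_antisymm ((hK'mem z).1 hz s) (hcon z hz hdz)
    obtain ⟨x, hxK₀, hxd⟩ := hwitK₀ i a ha
    have hxKd := hK₀Kd hxK₀
    have hsph : ∀ x' ∈ Kd, dist a x' ≤ d i → ∃ b ∈ A s, dist x' b = d s := by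
      intro x' hx' hdx'
      have h1 : infDist x' (A s) ≤ d s := (hKdmem x').1 hx' s
      obtain ⟨b, hb, hbd⟩ := (hAfin s).isCompact.exists_infDist_eq_dist (hAne s) x'
      have h2 : d s ≤ infDist x' (A s) := by
        rw [← heqd x' (hKdK' hx') hdx']
        exact infDist_le_infDist_of_subset (hACsub s) (hAne s)
      exact ⟨b, hb, by rw [← hbd]; exact le_antisymm h1 h2⟩
    have hnotHPD : ∀ x' ∈ Kd, dist a x' ≤ d i → x' ∉ HPD := by
      intro x' hx' hdx' hHP
      obtain ⟨b, hb, hbd⟩ := hsph x' hx' hdx'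
      have hxU : x' ∈ UdConv := hssub ⟨hfrontier x' b hb hbd, hHP⟩
      exact absurd (heqd x' (hKdK' hx') hdx') (ne_of_lt (hUdlt x' hxU s))
    have haD : a ∉ D i := by
      intro haD
      exact hnotHPD x hxKd hxd (hHPDmem x i a hxKd haD (by rw [dist_comm]; exact hxd))
    have hinf : (closedBall a (d i) ∩ Kd).Infinite := by
      rw [hD i] at haD
      simp only [mem_setOf_eq, not_and] at haD
      exact fun hfin => haD ha hfin
    -- pigeonhole over the finite set A s
    have hcov : (closedBall a (d i) ∩ Kd) ⊆
        ⋃ b ∈ A s, {x' : X | x' ∈ closedBall a (d i) ∩ Kd ∧ dist x' b = d s} := by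
      intro x' hx'
      obtain ⟨b, hb, hbd⟩ := hsph x' hx'.2 (by rw [dist_comm]; exact mem_closedBall.1 hx'.1)
      exact mem_iUnion₂.2 ⟨b, hb, hx', hbd⟩
    have hexb : ∃ b ∈ A s,
        {x' : X | x' ∈ closedBall a (d i) ∩ Kd ∧ dist x' b = d s}.Infinite := by
      by_contra hfin
      push_neg at hfin
      exact hinf (((hAfin s).biUnion fun b hb => hfin b hb).subset hcov)
    obtain ⟨b, hb, hbinf⟩ := hexb
    obtain ⟨x₁, hx₁, x₂, hx₂, hne12⟩ := hbinf.nontrivial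
    set m : X := (1/2 : ℝ) • x₁ + (1/2 : ℝ) • x₂ with hmdef
    have hm1 : m ∈ interior (closedBall b (d s)) :=
      strictConvex_closedBall ℝ b (d s) (mem_closedBall.2 hx₁.2.le) (mem_closedBall.2 hx₂.2.le)
        hne12 (by norm_num) (by norm_num) (by norm_num)
    rw [interior_closedBall b (ne_of_gt (hdpos s)), mem_ball] at hm1
    have hma : m ∈ closedBall a (d i) :=
      (convex_closedBall a (d i)) hx₁.1.1 hx₂.1.1 (by norm_num) (by norm_num) (by norm_num)
    have hmK' : m ∈ K' :=
      hK'conv (hKdK' hx₁.1.2) (hKdK' hx₂.1.2) (by norm_num) (by norm_num) (by norm_num)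
    have hfinal := heqd m hmK' (by rw [dist_comm]; exact mem_closedBall.1 hma)
    have hlt : infDist m (C s) ≤ dist m b := infDist_le_dist_of_mem (hACsub s hb)
    linarith
  -- combined witnesses
  have hwitAll : ∀ i, ∀ a ∈ A i, ∃ z, z ∈ K' ∧ dist a z ≤ d i ∧ infDist z (C s) < d s ∧
      (i = s → dist a z < d s) := by
    intro i a ha
    by_cases his : i = s
    · subst his
      obtain ⟨z, hzK, hzd⟩ := hwits a ha
      refine ⟨z, hzK, hzd.le, ?_, fun _ => hzd⟩
      calc infDist z (C i) ≤ dist z a := infDist_le_dist_of_mem (hACsub i ha)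
        _ < d i := by rwa [dist_comm]
    · obtain ⟨z, hzK, hzd, hzinf⟩ := hwit1 i a ha
      exact ⟨z, hzK, hzd, hzinf, fun h => absurd h his⟩
  -- choice function and epsilon
  let zf : Fin n → X → X := fun i a => if h : a ∈ A i then (hwitAll i a h).choose else 0
  have hzf : ∀ i, ∀ a ∈ A i, zf i a ∈ K' ∧ dist a (zf i a) ≤ d i ∧
      infDist (zf i a) (C s) < d s ∧ (i = s → dist a (zf i a) < d s) := by
    intro i a ha
    have hz : zf i a = (hwitAll i a ha).choose := dif_pos ha
    rw [hz]
    exact (hwitAll i a ha).choose_spec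
  let slack : Fin n → X → ℝ := fun i a =>
    d s - max (infDist (zf i a) (C s)) (if i = s then dist a (zf i a) else 0)
  have hslackeq : ∀ i a, slack i a =
      d s - max (infDist (zf i a) (C s)) (if i = s then dist a (zf i a) else 0) :=
    fun i a => rfl
  have hslackpos : ∀ i, ∀ a ∈ A i, 0 < slack i a := by
    intro i a ha
    obtain ⟨_, _, h3, h4⟩ := hzf i a ha
    have hmax : max (infDist (zf i a) (C s)) (if i = s then dist a (zf i a) else 0) < d s := by
      apply max_lt h3
      split_ifs with h
      · exact h4 h
      · exact hdpos s
    rw [hslackeq]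
    linarith
  let F : Finset ((_ : Fin n) × X) :=
    (Finset.univ : Finset (Fin n)).sigma fun i => (hAfin i).toFinset
  let T : Finset ℝ := F.image fun p => slack p.1 p.2
  have hFne : F.Nonempty :=
    ⟨⟨s, (hAne s).choose⟩, Finset.mem_sigma.2
      ⟨Finset.mem_univ _, (hAfin s).mem_toFinset.2 (hAne s).choose_spec⟩⟩
  have hTne : T.Nonempty := hFne.image _
  set ε : ℝ := T.min' hTne with hεdef
  have hεpos : 0 < ε := by
    obtain ⟨p, hpF, hpe⟩ := Finset.mem_image.1 (T.min'_mem hTne)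
    have hp : p.2 ∈ A p.1 := (hAfin p.1).mem_toFinset.1 (Finset.mem_sigma.1 hpF).2
    rw [hεdef, ← hpe]
    exact hslackpos p.1 p.2 hp
  have hεle : ∀ i, ∀ a ∈ A i, ε ≤ slack i a := by
    intro i a ha
    exact T.min'_le _ (Finset.mem_image.2 ⟨⟨i, a⟩,
      Finset.mem_sigma.2 ⟨Finset.mem_univ _, (hAfin i).mem_toFinset.2 ha⟩, rfl⟩)
  have hz1 : ∀ i, ∀ a ∈ A i, infDist (zf i a) (C s) ≤ d s - ε := by
    intro i a ha
    have h := hεle i a ha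
    have h2 : infDist (zf i a) (C s) ≤
        max (infDist (zf i a) (C s)) (if i = s then dist a (zf i a) else 0) := le_max_left _ _
    rw [hslackeq] at h
    linarith
  have hz2 : ∀ a ∈ A s, dist a (zf s a) ≤ d s - ε := by
    intro a ha
    have h := hεle s a ha
    have h2 : dist a (zf s a) ≤
        max (infDist (zf s a) (C s)) (if s = s then dist a (zf s a) else 0) := by
      rw [if_pos rfl]; exact le_max_right _ _
    rw [hslackeq] at h
    linarith
  -- membership of witnesses in K''
  set K'' : Set X := K' ∩ {x : X | infDist x (C s) ≤ d s - ε} with hK''def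
  have hzfK'' : ∀ i, ∀ a ∈ A i, zf i a ∈ K'' :=
    fun i a ha => ⟨(hzf i a ha).1, hz1 i a ha⟩
  have hK''ne : K''.Nonempty := ⟨zf s (hAne s).choose, hzfK'' s _ (hAne s).choose_spec⟩
  have hdsε : 0 ≤ d s - ε :=
    le_trans infDist_nonneg (hz1 s (hAne s).choose (hAne s).choose_spec)
  have hK''conv : Convex ℝ K'' :=
    hK'conv.inter (aux_convex_infDist_le (hCconv s) (hCcpt s) (hCne s) _)
  have hK''closed : IsClosed K'' := by
    apply IsClosed.inter
    · exact isClosed_iInter fun i =>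
        isClosed_le (continuous_infDist_pt (C i)) continuous_const
    · exact isClosed_le (continuous_infDist_pt (C s)) continuous_const
  have hK''cpt : IsCompact K'' := by
    obtain ⟨R, hR⟩ := (hCcpt s).isBounded.subset_closedBall 0
    have hsub : K'' ⊆ closedBall 0 (d s + R) := by
      intro x hx
      obtain ⟨y, hyC, hy⟩ := (hCcpt s).exists_infDist_eq_dist (hCne s) x
      have h1 : dist x y ≤ d s := by
        rw [← hy]
        exact le_trans hx.2 (by linarith)
      have h2 : dist y 0 ≤ R := mem_closedBall.1 (hR hyC)
      exact mem_closedBall.2 (le_trans (dist_triangle x y 0) (by linarith))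
    exact (isCompact_closedBall 0 (d s + R)).of_isClosed_subset hK''closed hsub
  -- Hausdorff distance bounds
  have hHi : ∀ i, hausdorffDist (C i) K'' ≤ d i := by
    intro i
    apply hausdorffDist_le_of_infDist (hd0 i)
    · intro y hy
      have hTconv : Convex ℝ {y : X | infDist y K'' ≤ d i} :=
        aux_convex_infDist_le hK''conv hK''cpt hK''ne _
      have hsubT : A i ⊆ {y : X | infDist y K'' ≤ d i} := by
        intro a ha
        exact le_trans (infDist_le_dist_of_mem (hzfK'' i a ha)) ((hzf i a ha).2.1)
      exact convexHull_min hsubT hTconv hy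
    · intro x hx
      exact (hK'mem x).1 hx.1 i
  have hHs : hausdorffDist (C s) K'' ≤ d s - ε := by
    apply hausdorffDist_le_of_infDist hdsε
    · intro y hy
      have hTconv : Convex ℝ {y : X | infDist y K'' ≤ d s - ε} :=
        aux_convex_infDist_le hK''conv hK''cpt hK''ne _
      have hsubT : A s ⊆ {y : X | infDist y K'' ≤ d s - ε} := by
        intro a ha
        exact le_trans (infDist_le_dist_of_mem (hzfK'' s a ha)) (hz2 a ha)
      exact convexHull_min hsubT hTconv hy
    · intro x hx
      exact hx.2
  -- final computation
  have hsum : steinerSum C K'' < ∑ i, d i := by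
    unfold steinerSum
    apply Finset.sum_lt_sum (fun i _ => hHi i)
    exact ⟨s, Finset.mem_univ s, lt_of_le_of_lt hHs (by linarith)⟩
  have hsumA : steinerSum A K₀ = ∑ i, d i := by
    unfold steinerSum
    exact Finset.sum_congr rfl fun i _ => (hK₀d i).symm
  have hInfA : steinerInf A = ∑ i, d i := by
    have hmem : (∑ i, d i) ∈ {r : ℝ | ∃ K : Set X, K.Nonempty ∧ IsCompact K ∧ r = steinerSum A K} :=
      ⟨K₀, hK₀ne, hK₀cpt, hsumA.symm⟩
    have hlb : ∀ r ∈ {r : ℝ | ∃ K : Set X, K.Nonempty ∧ IsCompact K ∧ r = steinerSum A K},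
        (∑ i, d i) ≤ r := by
      rintro r ⟨K, hne, hcpt, rfl⟩
      rw [← hsumA]
      exact hK₀min K hne hcpt
    exact le_antisymm (csInf_le ⟨∑ i, d i, fun _ hr => hlb _ hr⟩ hmem)
      (le_csInf ⟨_, hmem⟩ (fun _ hr => hlb _ hr))
  have hInfC : steinerInf C ≤ steinerSum C K'' := by
    refine csInf_le ⟨0, ?_⟩ ⟨K'', hK''ne, hK''cpt, rfl⟩
    rintro r ⟨K, hne, hcpt, rfl⟩
    exact Finset.sum_nonneg fun i _ => hausdorffDist_nonneg
  calc steinerInf C ≤ steinerSum C K'' := hInfC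
    _ < ∑ i, d i := hsum
    _ = steinerInf A := hInfA.symm
end
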